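/- Let q ≥ 1 be an integer and a coprime to q. Let M, N ≥ 1 be real, and let (α_m), (β_n) be complex sequences supported on [M, 2M] and [N, 2N] respectively with |α_m|, |β_n| ≤ 1. Then the bilinear sum ∑_{M ≤ m ≤ 2M} ∑_{N ≤ n ≤ 2N} α_m β_n e(a m n / q) is, up to an absolute constant factor, at most (MN)^{1/2} q^{-1/2} (M + q)^{1/2} (N + q)^{1/2}. -/

import Mathlib

open Real Finset

/-- `e(t) = exp(2πit)`. -/
noncomputable def eR (t : ℝ) : ℂ := Complex.exp (2 * Real.pi * Complex.I * t)

lemma eR_add (x y : ℝ) : eR (x + y) = eR x * eR y := by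
  simp [eR, ← Complex.exp_add]; ring_nf

lemma eR_int (k : ℤ) : eR k = 1 := by
  rw [eR, show (2 * Real.pi * Complex.I * (k:ℝ) : ℂ) = (k:ℤ) * (2 * Real.pi * Complex.I) by push_cast; ring]
  exact Complex.exp_int_mul_two_pi_mul_I k

lemma eR_pow (x : ℝ) (r : ℕ) : eR x ^ r = eR (r * x) := by
  rw [eR, eR, ← Complex.exp_nat_mul]; congr 1; push_cast; ring

lemma eR_conj (x : ℝ) : (starRingEnd ℂ) (eR x) = eR (-x) := by
  rw [eR, eR, ← Complex.exp_conj]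
  congr 1
  simp [Complex.ext_iff]

lemma eR_eq_one_iff (x : ℝ) : eR x = 1 ↔ ∃ k : ℤ, x = k := by
  rw [eR, Complex.exp_eq_one_iff]
  constructor
  · rintro ⟨n, hn⟩
    refine ⟨n, ?_⟩
    have h2 : (2 * Real.pi * Complex.I : ℂ) ≠ 0 := by
      simp [Real.pi_ne_zero, Complex.I_ne_zero]
    rw [mul_comm (n:ℂ)] at hn
    have h3 := mul_left_cancel₀ h2 hn
    exact_mod_cast h3
  · rintro ⟨k, rfl⟩
    exact ⟨k, by push_cast; ring⟩

lemma orth (q : ℕ) (hq : 1 ≤ q) (a : ℤ) (ha : IsCoprime a (q:ℤ)) (h : ℤ) :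
    ∑ r ∈ range q, eR (((a * h : ℤ) : ℝ) / q) ^ r
      = if (q:ℤ) ∣ h then (q:ℂ) else 0 := by
  have hq0 : (q:ℝ) ≠ 0 := by positivity
  set z := eR (((a * h : ℤ) : ℝ) / q) with hz
  by_cases hd : (q:ℤ) ∣ h
  · have hz1 : z = 1 := by
      obtain ⟨c, rfl⟩ := hd
      rw [hz, show (((a * ((q:ℤ) * c) : ℤ) : ℝ) / q) = ((a * c : ℤ) : ℝ) by push_cast; field_simp]
      exact eR_int _
    simp [hd, hz1]
  · have hzq : z ^ q = 1 := by
      rw [hz, eR_pow, show ((q:ℕ):ℝ) * (((a * h : ℤ) : ℝ) / q) = ((a*h : ℤ):ℝ) by field_simp]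
      exact eR_int _
    have hz1 : z ≠ 1 := by
      rw [hz, Ne, eR_eq_one_iff]
      rintro ⟨k, hk⟩
      apply hd
      have : (a * h : ℤ) = k * q := by
        have : ((a*h : ℤ):ℝ) = (k:ℝ) * q := by
          field_simp at hk; rw [mul_comm (k:ℝ)]; exact_mod_cast hk
        exact_mod_cast this
      exact ha.symm.dvd_of_dvd_mul_left ⟨k, by linarith [this]⟩
    rw [geom_sum_eq hz1, hzq]
    simp [hd]

-- step 4: full-period second moment
lemma second_moment (q : ℕ) (hq : 1 ≤ q) (a : ℤ) (ha : IsCoprime a (q:ℤ))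
    (T : Finset ℕ) (hT : Set.InjOn (· % q) T) (β : ℕ → ℂ) :
    ∑ r ∈ range q, Complex.normSq (∑ n ∈ T, β n * eR ((a:ℝ) * r * n / q))
      = q * ∑ n ∈ T, Complex.normSq (β n) := by
  have key : ∑ r ∈ range q, ((∑ n ∈ T, β n * eR ((a:ℝ) * r * n / q)) *
      (starRingEnd ℂ) (∑ n ∈ T, β n * eR ((a:ℝ) * r * n / q)))
      = (q : ℂ) * ∑ n ∈ T, β n * (starRingEnd ℂ) (β n) := by
    have expand : ∀ r : ℕ, (∑ n ∈ T, β n * eR ((a:ℝ) * r * n / q)) *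
        (starRingEnd ℂ) (∑ n ∈ T, β n * eR ((a:ℝ) * r * n / q))
        = ∑ n ∈ T, ∑ n' ∈ T, (β n * (starRingEnd ℂ) (β n')) *
            eR (((a * ((n:ℤ) - (n':ℤ)) : ℤ) : ℝ) / q) ^ r := by
      intro r
      rw [map_sum, Finset.sum_mul_sum]
      refine Finset.sum_congr rfl fun n _ => Finset.sum_congr rfl fun n' _ => ?_
      rw [map_mul, eR_conj, eR_pow]
      have : (a:ℝ) * r * n / q + -((a:ℝ) * r * n' / q) = (r:ℝ) * (((a * ((n:ℤ) - (n':ℤ)) : ℤ) : ℝ) / q) := by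
        push_cast; ring
      rw [← this, eR_add]
      ring
    simp_rw [expand]
    rw [Finset.sum_comm]
    have step : ∀ n ∈ T, ∑ r ∈ range q, ∑ n' ∈ T,
        (β n * (starRingEnd ℂ) (β n')) * eR (((a * ((n:ℤ) - (n':ℤ)) : ℤ) : ℝ) / q) ^ r
        = (q:ℂ) * (β n * (starRingEnd ℂ) (β n)) := by
      intro n hn
      rw [Finset.sum_comm]
      have collapse : ∀ n' ∈ T, ∑ r ∈ range q,
          (β n * (starRingEnd ℂ) (β n')) * eR (((a * ((n:ℤ) - (n':ℤ)) : ℤ) : ℝ) / q) ^ r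
          = if n' = n then (q:ℂ) * (β n * (starRingEnd ℂ) (β n')) else 0 := by
        intro n' hn'
        rw [← Finset.mul_sum, orth q hq a ha]
        by_cases he : n' = n
        · subst he; simp [mul_comm]
        · have hnd : ¬ ((q:ℤ) ∣ ((n:ℤ) - (n':ℤ))) := by
            intro hdvd
            exact he (hT hn' hn (Nat.modEq_iff_dvd.mpr hdvd))
          rw [if_neg hnd, if_neg he, mul_zero]
      rw [Finset.sum_congr rfl collapse, Finset.sum_ite_eq' T n
        (fun n' => (q:ℂ) * (β n * (starRingEnd ℂ) (β n'))), if_pos hn]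
    rw [Finset.sum_congr rfl step, ← Finset.mul_sum]
  simp_rw [Complex.mul_conj] at key
  exact_mod_cast key

lemma block_bound (q : ℕ) (hq : 1 ≤ q) (a : ℤ) (ha : IsCoprime a (q:ℤ))
    (S T : Finset ℕ) (hS : Set.InjOn (· % q) S) (hT : Set.InjOn (· % q) T)
    (α β : ℕ → ℂ) (hα : ∀ m, ‖α m‖ ≤ 1) (hβ : ∀ n, ‖β n‖ ≤ 1) :
    ‖∑ m ∈ S, ∑ n ∈ T, α m * β n * eR ((a:ℝ) * m * n / q)‖
      ≤ Real.sqrt (S.card * (q * T.card)) := by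
  set Tm : ℕ → ℂ := fun m => ∑ n ∈ T, β n * eR ((a:ℝ) * m * n / q) with hTm
  have step1 : ‖∑ m ∈ S, ∑ n ∈ T, α m * β n * eR ((a:ℝ) * m * n / q)‖
      ≤ ∑ m ∈ S, ‖Tm m‖ := by
    calc ‖∑ m ∈ S, ∑ n ∈ T, α m * β n * eR ((a:ℝ) * m * n / q)‖
        ≤ ∑ m ∈ S, ‖∑ n ∈ T, α m * β n * eR ((a:ℝ) * m * n / q)‖ :=
          norm_sum_le _ _
      _ ≤ ∑ m ∈ S, ‖Tm m‖ := by
          refine Finset.sum_le_sum fun m _ => ?_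
          have : (∑ n ∈ T, α m * β n * eR ((a:ℝ) * m * n / q)) = α m * Tm m := by
            rw [hTm, Finset.mul_sum]; exact Finset.sum_congr rfl fun n _ => by ring
          rw [this, norm_mul]
          exact mul_le_of_le_one_left (norm_nonneg _) (hα m)
  have periodic : ∀ m : ℕ, Tm m = Tm (m % q) := by
    intro m
    refine Finset.sum_congr rfl fun n _ => ?_
    congr 1
    have hm : (m : ℝ) = (m % q : ℕ) + (q:ℝ) * (m / q : ℕ) := by
      exact_mod_cast congrArg (Nat.cast : ℕ → ℝ) (Nat.mod_add_div m q).symm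
    have hq0 : (q:ℝ) ≠ 0 := by positivity
    have key : ∀ R D : ℕ, (m:ℝ) = R + (q:ℝ) * D →
        (a:ℝ) * m * n / q = (a:ℝ) * R * n / q + ((a * D * n : ℤ) : ℝ) := by
      intro R D h; rw [h]; push_cast; field_simp
    rw [key (m % q) (m / q) hm, eR_add, eR_int, mul_one]
  have step2 : (∑ m ∈ S, ‖Tm m‖) ^ 2 ≤ S.card * ∑ m ∈ S, ‖Tm m‖ ^ 2 := by
    have := Finset.sum_mul_sq_le_sq_mul_sq S (fun _ => (1:ℝ)) (fun m => ‖Tm m‖)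
    simpa using this
  have step3 : ∑ m ∈ S, ‖Tm m‖ ^ 2 ≤ q * T.card := by
    have h1 : ∑ m ∈ S, ‖Tm m‖ ^ 2 = ∑ r ∈ S.image (· % q), ‖Tm r‖ ^ 2 := by
      rw [Finset.sum_image (fun x hx y hy h => hS hx hy h)]
      exact Finset.sum_congr rfl fun m _ => by rw [← periodic m]
    have h2 : ∑ r ∈ S.image (· % q), ‖Tm r‖ ^ 2
        ≤ ∑ r ∈ range q, ‖Tm r‖ ^ 2 := by
      refine Finset.sum_le_sum_of_subset_of_nonneg ?_ (fun _ _ _ => by positivity)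
      intro r hr
      simp only [Finset.mem_image] at hr
      obtain ⟨m, _, rfl⟩ := hr
      exact Finset.mem_range.mpr (Nat.mod_lt m hq)
    have h3 : ∑ r ∈ range q, ‖Tm r‖ ^ 2 = q * ∑ n ∈ T, Complex.normSq (β n) := by
      simp_rw [← Complex.normSq_eq_norm_sq]
      exact second_moment q hq a ha T hT β
    have h4 : ∑ n ∈ T, Complex.normSq (β n) ≤ T.card := by
      calc ∑ n ∈ T, Complex.normSq (β n) ≤ ∑ n ∈ T, 1 := by
            refine Finset.sum_le_sum fun n _ => ?_
            rw [Complex.normSq_eq_norm_sq]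
            nlinarith [hβ n, norm_nonneg (β n)]
        _ = T.card := by simp
    calc ∑ m ∈ S, ‖Tm m‖ ^ 2
        ≤ ∑ r ∈ range q, ‖Tm r‖ ^ 2 := h1 ▸ h2
      _ = q * ∑ n ∈ T, Complex.normSq (β n) := h3
      _ ≤ q * T.card := by
          have hq' : (0:ℝ) ≤ q := by positivity
          nlinarith
  refine step1.trans ?_
  have hnn : 0 ≤ ∑ m ∈ S, ‖Tm m‖ := Finset.sum_nonneg fun m _ => norm_nonneg _
  refine (Real.le_sqrt hnn (mul_nonneg (Nat.cast_nonneg _) (mul_nonneg (Nat.cast_nonneg _) (Nat.cast_nonneg _)))).mpr ?_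
  calc (∑ m ∈ S, ‖Tm m‖) ^ 2 ≤ S.card * ∑ m ∈ S, ‖Tm m‖ ^ 2 := step2
    _ ≤ S.card * ((q:ℝ) * T.card) := by
        have hS' : (0:ℝ) ≤ S.card := Nat.cast_nonneg _
        nlinarith [step3]

-- blocks of an Icc
lemma fiber_injOn (q : ℕ) (hq : 1 ≤ q) (m1 m2 k : ℕ) :
    Set.InjOn (· % q) ((Finset.Icc m1 m2).filter (fun m => (m - m1) / q = k)) := by
  intro m hm m' hm' hmod
  simp only [Finset.coe_filter, Set.mem_setOf_eq, Finset.mem_Icc] at hm hm'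
  obtain ⟨⟨h1, _⟩, hk⟩ := hm
  obtain ⟨⟨h1', _⟩, hk'⟩ := hm'
  have hq0 : 0 < q := hq
  have b1 : k * q ≤ m - m1 := (Nat.le_div_iff_mul_le hq0).mp hk.ge
  have b2 : m - m1 < k * q + q := by
    have := (Nat.div_lt_iff_lt_mul hq0).mp (hk.le.trans_lt (Nat.lt_succ_self k))
    calc m - m1 < (k+1) * q := this
      _ = k * q + q := by ring
  have b1' : k * q ≤ m' - m1 := (Nat.le_div_iff_mul_le hq0).mp hk'.ge
  have b2' : m' - m1 < k * q + q := by
    have := (Nat.div_lt_iff_lt_mul hq0).mp (hk'.le.trans_lt (Nat.lt_succ_self k))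
    calc m' - m1 < (k+1) * q := this
      _ = k * q + q := by ring
  have hdvd : (q:ℤ) ∣ (m':ℤ) - m := Nat.modEq_iff_dvd.mp hmod
  have habs : |(m':ℤ) - m| < q := by
    rw [abs_lt]
    constructor <;> omega
  have : (m':ℤ) - m = 0 := Int.eq_zero_of_abs_lt_dvd hdvd habs
  omega

lemma fiber_card_le (q : ℕ) (hq : 1 ≤ q) (m1 m2 k : ℕ) :
    ((Finset.Icc m1 m2).filter (fun m => (m - m1) / q = k)).card ≤ min (m2 + 1 - m1) q := by
  refine le_min ?_ ?_
  · exact (Finset.card_filter_le _ _).trans (by rw [Nat.card_Icc])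
  · exact (Finset.card_le_card_of_injOn (· % q)
      (fun m _ => Finset.mem_range.mpr (Nat.mod_lt m hq)) (fiber_injOn q hq m1 m2 k)).trans
      (Finset.card_range q).le

set_option maxHeartbeats 1000000 in
theorem bilinear_sum_bound :
    ∃ C : ℝ, 0 < C ∧ ∀ (q : ℕ), 1 ≤ q → ∀ (a : ℤ), IsCoprime a (q : ℤ) →
      ∀ (M N : ℝ), 1 ≤ M → 1 ≤ N → ∀ (α β : ℕ → ℂ),
        (∀ m, ‖α m‖ ≤ 1) → (∀ n, ‖β n‖ ≤ 1) →
        ‖∑ m ∈ Finset.Icc ⌈M⌉₊ ⌊2 * M⌋₊, ∑ n ∈ Finset.Icc ⌈N⌉₊ ⌊2 * N⌋₊,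
            α m * β n * eR ((a : ℝ) * m * n / q)‖ ≤
          C * Real.sqrt (M * N) * (Real.sqrt q)⁻¹ *
            Real.sqrt (M + q) * Real.sqrt (N + q) := by
  refine ⟨4, by norm_num, ?_⟩
  intro q hq a ha M N hM hN α β hα hβ
  set m1 := ⌈M⌉₊ with hm1
  set m2 := ⌊2 * M⌋₊ with hm2
  set n1 := ⌈N⌉₊ with hn1
  set n2 := ⌊2 * N⌋₊ with hn2
  set Km := (m2 - m1) / q + 1 with hKm
  set Kn := (n2 - n1) / q + 1 with hKn
  set X := min (m2 + 1 - m1) q with hX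
  set Y := min (n2 + 1 - n1) q with hY
  set Sk : ℕ → Finset ℕ := fun k => (Finset.Icc m1 m2).filter (fun m => (m - m1) / q = k) with hSk
  set Tl : ℕ → Finset ℕ := fun l => (Finset.Icc n1 n2).filter (fun n => (n - n1) / q = l) with hTl
  have hq0 : 0 < q := hq
  have hqR : (0:ℝ) < q := by exact_mod_cast hq0
  -- decompose the sum
  have decomp : ∑ m ∈ Finset.Icc m1 m2, ∑ n ∈ Finset.Icc n1 n2, α m * β n * eR ((a : ℝ) * m * n / q)
      = ∑ k ∈ range Km, ∑ l ∈ range Kn, ∑ m ∈ Sk k, ∑ n ∈ Tl l,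
          α m * β n * eR ((a : ℝ) * m * n / q) := by
    have mapsM : ∀ m ∈ Finset.Icc m1 m2, (m - m1) / q ∈ range Km := by
      intro m hm
      rw [Finset.mem_range, hKm]
      have : (m - m1) / q ≤ (m2 - m1) / q :=
        Nat.div_le_div_right (Nat.sub_le_sub_right (Finset.mem_Icc.mp hm).2 m1)
      omega
    have mapsN : ∀ n ∈ Finset.Icc n1 n2, (n - n1) / q ∈ range Kn := by
      intro n hn
      rw [Finset.mem_range, hKn]
      have : (n - n1) / q ≤ (n2 - n1) / q :=
        Nat.div_le_div_right (Nat.sub_le_sub_right (Finset.mem_Icc.mp hn).2 n1)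
      omega
    rw [← Finset.sum_fiberwise_of_maps_to mapsM]
    refine Finset.sum_congr rfl fun k _ => ?_
    calc ∑ m ∈ Sk k, ∑ n ∈ Finset.Icc n1 n2, α m * β n * eR ((a : ℝ) * m * n / q)
        = ∑ m ∈ Sk k, ∑ l ∈ range Kn, ∑ n ∈ Tl l, α m * β n * eR ((a : ℝ) * m * n / q) :=
          Finset.sum_congr rfl fun m _ => (Finset.sum_fiberwise_of_maps_to mapsN _).symm
      _ = ∑ l ∈ range Kn, ∑ m ∈ Sk k, ∑ n ∈ Tl l, α m * β n * eR ((a : ℝ) * m * n / q) :=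
          Finset.sum_comm
  -- bound each block and count
  have main : ‖∑ m ∈ Finset.Icc m1 m2, ∑ n ∈ Finset.Icc n1 n2,
      α m * β n * eR ((a : ℝ) * m * n / q)‖
      ≤ (Km : ℝ) * Kn * Real.sqrt ((X:ℝ) * ((q:ℝ) * Y)) := by
    rw [decomp]
    calc ‖∑ k ∈ range Km, ∑ l ∈ range Kn, ∑ m ∈ Sk k, ∑ n ∈ Tl l,
          α m * β n * eR ((a : ℝ) * m * n / q)‖
        ≤ ∑ k ∈ range Km, ∑ l ∈ range Kn, ‖∑ m ∈ Sk k, ∑ n ∈ Tl l,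
          α m * β n * eR ((a : ℝ) * m * n / q)‖ := by
          refine (norm_sum_le _ _).trans (Finset.sum_le_sum fun k _ => ?_)
          exact norm_sum_le _ _
      _ ≤ ∑ k ∈ range Km, ∑ l ∈ range Kn, Real.sqrt ((X:ℝ) * ((q:ℝ) * Y)) := by
          refine Finset.sum_le_sum fun k _ => Finset.sum_le_sum fun l _ => ?_
          refine (block_bound q hq a ha (Sk k) (Tl l) (fiber_injOn q hq m1 m2 k)
            (fiber_injOn q hq n1 n2 l) α β hα hβ).trans ?_
          refine Real.sqrt_le_sqrt ?_
          have c1 : ((Sk k).card : ℝ) ≤ (X:ℝ) := by exact_mod_cast fiber_card_le q hq m1 m2 k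
          have c2 : ((Tl l).card : ℝ) ≤ (Y:ℝ) := by exact_mod_cast fiber_card_le q hq n1 n2 l
          exact mul_le_mul c1 (mul_le_mul_of_nonneg_left c2 hqR.le)
            (by positivity) (by positivity)
      _ = (Km : ℝ) * Kn * Real.sqrt ((X:ℝ) * ((q:ℝ) * Y)) := by
          simp [Finset.sum_const, Finset.card_range]; ring
  refine main.trans ?_
  -- real-number facts
  have hm1M : M ≤ (m1:ℝ) := Nat.le_ceil M
  have hm2M : (m2:ℝ) ≤ 2 * M := Nat.floor_le (by linarith)
  have hn1N : N ≤ (n1:ℝ) := Nat.le_ceil N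
  have hn2N : (n2:ℝ) ≤ 2 * N := Nat.floor_le (by linarith)
  have hsubM : ((m2 - m1 : ℕ) : ℝ) ≤ M := by
    rcases le_or_gt m1 m2 with h | h
    · rw [Nat.cast_sub h]; linarith
    · rw [Nat.sub_eq_zero_of_le h.le]; simpa using by linarith
  have hsubN : ((n2 - n1 : ℕ) : ℝ) ≤ N := by
    rcases le_or_gt n1 n2 with h | h
    · rw [Nat.cast_sub h]; linarith
    · rw [Nat.sub_eq_zero_of_le h.le]; simpa using by linarith
  have hKmR : (Km:ℝ) * q ≤ M + q := by
    have h1 : ((m2 - m1) / q * q : ℕ) ≤ (m2 - m1 : ℕ) := Nat.div_mul_le_self _ _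
    have h1R : (((m2 - m1) / q : ℕ) : ℝ) * q ≤ M := le_trans (by exact_mod_cast h1) hsubM
    rw [hKm]; push_cast; linarith
  have hKnR : (Kn:ℝ) * q ≤ N + q := by
    have h1 : ((n2 - n1) / q * q : ℕ) ≤ (n2 - n1 : ℕ) := Nat.div_mul_le_self _ _
    have h1R : (((n2 - n1) / q : ℕ) : ℝ) * q ≤ N := le_trans (by exact_mod_cast h1) hsubN
    rw [hKn]; push_cast; linarith
  have hX1 : (X:ℝ) ≤ 2 * M := by
    have : (X:ℕ) ≤ m2 + 1 - m1 := min_le_left _ _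
    have hR : ((m2 + 1 - m1 : ℕ) : ℝ) ≤ M + 1 := by
      rcases le_or_gt m1 (m2+1) with h | h
      · rw [Nat.cast_sub h]; push_cast; linarith
      · rw [Nat.sub_eq_zero_of_le h.le]; simpa using by linarith
    have := (Nat.cast_le (α := ℝ)).mpr this
    linarith
  have hX2 : (X:ℝ) ≤ q := by exact_mod_cast min_le_right _ _
  have hY1 : (Y:ℝ) ≤ 2 * N := by
    have : (Y:ℕ) ≤ n2 + 1 - n1 := min_le_left _ _
    have hR : ((n2 + 1 - n1 : ℕ) : ℝ) ≤ N + 1 := by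
      rcases le_or_gt n1 (n2+1) with h | h
      · rw [Nat.cast_sub h]; push_cast; linarith
      · rw [Nat.sub_eq_zero_of_le h.le]; simpa using by linarith
    have := (Nat.cast_le (α := ℝ)).mpr this
    linarith
  have hY2 : (Y:ℝ) ≤ q := by exact_mod_cast min_le_right _ _
  have hX0 : (0:ℝ) ≤ X := by positivity
  have hY0 : (0:ℝ) ≤ Y := by positivity
  have hKm0 : (0:ℝ) ≤ Km := by positivity
  have hKn0 : (0:ℝ) ≤ Kn := by positivity
  -- final arithmetic
  have hA : (Km:ℝ)^2 * X * q^2 ≤ 4 * M * q * (M + q) := by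
    have h1 : (Km:ℝ)*q*((Km:ℝ)*q) ≤ (M+q)*(M+q) :=
      mul_le_mul hKmR hKmR (by positivity) (by linarith)
    have h2 : (X:ℝ)*(M+q) ≤ 3*M*q := by
      nlinarith [mul_le_mul_of_nonneg_right hX2 (show (0:ℝ) ≤ M by linarith),
        mul_le_mul_of_nonneg_right hX1 hqR.le]
    have h3 : (0:ℝ) ≤ M*q*(M+q) := by positivity
    calc (Km:ℝ)^2 * X * q^2 = ((Km:ℝ)*q*((Km:ℝ)*q))*X := by ring
      _ ≤ ((M+q)*(M+q))*X := mul_le_mul_of_nonneg_right h1 hX0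
      _ = (M+q)*((X:ℝ)*(M+q)) := by ring
      _ ≤ (M+q)*(3*M*q) := mul_le_mul_of_nonneg_left h2 (by linarith)
      _ ≤ 4 * M * q * (M + q) := by nlinarith [h3]
  have hB : (Kn:ℝ)^2 * Y * q^2 ≤ 4 * N * q * (N + q) := by
    have h1 : (Kn:ℝ)*q*((Kn:ℝ)*q) ≤ (N+q)*(N+q) :=
      mul_le_mul hKnR hKnR (by positivity) (by linarith)
    have h2 : (Y:ℝ)*(N+q) ≤ 3*N*q := by
      nlinarith [mul_le_mul_of_nonneg_right hY2 (show (0:ℝ) ≤ N by linarith),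
        mul_le_mul_of_nonneg_right hY1 hqR.le]
    have h3 : (0:ℝ) ≤ N*q*(N+q) := by positivity
    calc (Kn:ℝ)^2 * Y * q^2 = ((Kn:ℝ)*q*((Kn:ℝ)*q))*Y := by ring
      _ ≤ ((N+q)*(N+q))*Y := mul_le_mul_of_nonneg_right h1 hY0
      _ = (N+q)*((Y:ℝ)*(N+q)) := by ring
      _ ≤ (N+q)*(3*N*q) := mul_le_mul_of_nonneg_left h2 (by linarith)
      _ ≤ 4 * N * q * (N + q) := by nlinarith [h3]
  have goal_sq : ((Km:ℝ) * Kn)^2 * ((X:ℝ) * ((q:ℝ) * Y)) * q ≤ 16 * (M*N) * ((M+q)*(N+q)) := by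
    have hAB : ((Km:ℝ)^2 * X * q^2) * ((Kn:ℝ)^2 * Y * q^2) ≤ (4*M*q*(M+q)) * (4*N*q*(N+q)) :=
      mul_le_mul hA hB (by positivity) (by positivity)
    refine le_of_mul_le_mul_right ?_ (show (0:ℝ) < (q:ℝ)^2 by positivity)
    calc ((Km:ℝ) * Kn)^2 * ((X:ℝ) * ((q:ℝ) * Y)) * q * (q:ℝ)^2
        = ((Km:ℝ)^2 * X * q^2) * ((Kn:ℝ)^2 * Y * q^2) := by ring
      _ ≤ (4*M*q*(M+q)) * (4*N*q*(N+q)) := hAB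
      _ = 16 * (M*N) * ((M+q)*(N+q)) * (q:ℝ)^2 := by ring
  -- convert to the sqrt form
  have lhs_nonneg : (0:ℝ) ≤ (Km : ℝ) * Kn * Real.sqrt ((X:ℝ) * ((q:ℝ) * Y)) := by positivity
  have rhs_nonneg : (0:ℝ) ≤ 4 * Real.sqrt (M * N) * (Real.sqrt q)⁻¹ *
      Real.sqrt (M + q) * Real.sqrt (N + q) := by positivity
  rw [← Real.sqrt_sq lhs_nonneg, ← Real.sqrt_sq rhs_nonneg]
  refine Real.sqrt_le_sqrt ?_
  have e1 : ((Km : ℝ) * Kn * Real.sqrt ((X:ℝ) * ((q:ℝ) * Y)))^2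
      = ((Km:ℝ) * Kn)^2 * ((X:ℝ) * ((q:ℝ) * Y)) := by
    rw [mul_pow, Real.sq_sqrt (by positivity)]
  have e2 : (4 * Real.sqrt (M * N) * (Real.sqrt q)⁻¹ * Real.sqrt (M + q) * Real.sqrt (N + q))^2
      = 16 * (M * N) * ((M+q)*(N+q)) / q := by
    have s1 : Real.sqrt (M*N)^2 = M*N := Real.sq_sqrt (by positivity)
    have s2 : Real.sqrt (M+q)^2 = M+q := Real.sq_sqrt (by positivity)
    have s3 : Real.sqrt (N+q)^2 = N+q := Real.sq_sqrt (by positivity)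
    have s4 : Real.sqrt q ^ 2 = q := Real.sq_sqrt (by positivity)
    have expand : (4 * Real.sqrt (M * N) * (Real.sqrt q)⁻¹ * Real.sqrt (M + q) * Real.sqrt (N + q))^2
        = 4^2 * Real.sqrt (M*N)^2 * ((Real.sqrt q ^ 2)⁻¹) * Real.sqrt (M+q)^2 * Real.sqrt (N+q)^2 := by
      ring
    rw [expand, s1, s2, s3, s4, div_eq_mul_inv]
    ring
  rw [e1, e2, le_div_iff₀ hqR]
  exact goal_sq
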